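/- The map Γ does not worsen the modulus of continuity beyond a fixed factor: for every bounded f : [0,T] → ℝᴺ and every δ > 0, w_T(Γ(f), δ) ≤ (1 + √N) w_T(f, δ). -/

import Mathlib

open Set

/-- The coordinate sum `1 · x` of a vector in Euclidean space. -/
noncomputable def sumC {N : ℕ} (x : EuclideanSpace ℝ (Fin N)) : ℝ := ∑ i, x i

/-- The regulator `g_f(t) = sup_{0 ≤ u ≤ t} (θ - 1·f(u))⁻`. -/
noncomputable def reg (N : ℕ) (θ : ℝ) (f : ℝ → EuclideanSpace ℝ (Fin N)) (t : ℝ) : ℝ :=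
  sSup ((fun u => max (sumC (f u) - θ) 0) '' Icc 0 t)

/-- The `N`-th standard basis vector `e_N`. -/
noncomputable def eN (N : ℕ) (hN : 1 ≤ N) : EuclideanSpace ℝ (Fin N) :=
  EuclideanSpace.single ⟨N - 1, by omega⟩ 1

/-- The Skorohod-type reflection map `Γ(f)(t) = f(t) - g_f(t) e_N`. -/
noncomputable def Gam (N : ℕ) (hN : 1 ≤ N) (θ : ℝ) (f : ℝ → EuclideanSpace ℝ (Fin N))
    (t : ℝ) : EuclideanSpace ℝ (Fin N) :=
  f t - reg N θ f t • eN N hN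

/-- The sup norm `‖f‖_T = sup_{t ∈ [0,T]} ‖f(t)‖`. -/
noncomputable def supNorm (N : ℕ) (T : ℝ) (f : ℝ → EuclideanSpace ℝ (Fin N)) : ℝ :=
  sSup ((fun t => ‖f t‖) '' Icc 0 T)

/-- The modulus of continuity `w_T(f, δ) = sup {‖f(u) - f(s)‖ : 0 ≤ s < u ≤ s + δ ≤ T}`. -/
noncomputable def modCont (N : ℕ) (T : ℝ) (f : ℝ → EuclideanSpace ℝ (Fin N)) (δ : ℝ) : ℝ :=
  sSup {x | ∃ s u : ℝ, 0 ≤ s ∧ s < u ∧ u ≤ s + δ ∧ s + δ ≤ T ∧ x = ‖f u - f s‖}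

noncomputable def onesV (N : ℕ) : EuclideanSpace ℝ (Fin N) := WithLp.toLp 2 (fun _ => 1)

lemma abs_sumC_le {N : ℕ} (x : EuclideanSpace ℝ (Fin N)) : |sumC x| ≤ Real.sqrt N * ‖x‖ := by
  have h1 : sumC x = inner (𝕜 := ℝ) (onesV N) x := by
    simp [PiLp.inner_apply, onesV, sumC]
  have h2 : ‖onesV N‖ = Real.sqrt N := by
    simp [EuclideanSpace.norm_eq, onesV]
  rw [h1, ← h2]
  exact abs_real_inner_le_norm _ _

lemma sumC_sub {N : ℕ} (x y : EuclideanSpace ℝ (Fin N)) : sumC (x - y) = sumC x - sumC y := by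
  simp [sumC, Finset.sum_sub_distrib]

/-- The reflection map `Γ` worsens the modulus of continuity by at most the factor `1 + √N`. -/
theorem gamma_modulus (N : ℕ) (hN : 1 ≤ N) (θ T : ℝ) (hT : 0 < T)
    (f : ℝ → EuclideanSpace ℝ (Fin N))
    (hf : ∃ C, ∀ t ∈ Icc (0:ℝ) T, ‖f t‖ ≤ C)
    (δ : ℝ) (hδ : 0 < δ) :
    modCont N T (fun t => Gam N hN θ f t) δ ≤ (1 + Real.sqrt N) * modCont N T f δ := by
  obtain ⟨C, hC⟩ := hf
  set w := modCont N T f δ with hw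
  set h : ℝ → ℝ := fun u => max (sumC (f u) - θ) 0 with hh
  set S : Set ℝ := {x | ∃ s u : ℝ, 0 ≤ s ∧ s < u ∧ u ≤ s + δ ∧ s + δ ≤ T ∧ x = ‖f u - f s‖}
    with hS
  -- bound on each element of S
  have hbddS : BddAbove S := by
    refine ⟨C + C, ?_⟩
    rintro x ⟨s, u, hs, hsu, huδ, hδT, rfl⟩
    have h1 : ‖f u‖ ≤ C := hC u ⟨by linarith, by linarith⟩
    have h2 : ‖f s‖ ≤ C := hC s ⟨hs, by linarith⟩
    calc ‖f u - f s‖ ≤ ‖f u‖ + ‖f s‖ := norm_sub_le _ _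
      _ ≤ C + C := by linarith
  have key : ∀ s u : ℝ, 0 ≤ s → s < u → u ≤ s + δ → s + δ ≤ T → ‖f u - f s‖ ≤ w := by
    intro s u hs hsu huδ hδT
    exact le_csSup hbddS ⟨s, u, hs, hsu, huδ, hδT, rfl⟩
  have hw0 : 0 ≤ w := by
    rcases le_or_gt δ T with hc | hc
    · have := key 0 δ le_rfl hδ (by linarith) (by linarith)
      exact le_trans (norm_nonneg _) this
    · have hSe : S = ∅ := by
        ext x
        simp only [hS, mem_setOf_eq, mem_empty_iff_false, iff_false, not_exists]
        rintro s u ⟨hs, _, _, hδT, _⟩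
        linarith
      rw [hw, modCont, ← hS, hSe, Real.sSup_empty]
  -- bounds for h
  have hhb : ∀ v ∈ Icc (0:ℝ) T, h v ≤ Real.sqrt N * C + |θ| := by
    intro v hv
    have h1 : sumC (f v) - θ ≤ Real.sqrt N * C + |θ| := by
      have := (abs_le.1 (abs_sumC_le (f v))).2
      have h2 : ‖f v‖ ≤ C := hC v hv
      have h3 : Real.sqrt N * ‖f v‖ ≤ Real.sqrt N * C :=
        mul_le_mul_of_nonneg_left h2 (Real.sqrt_nonneg _)
      have := neg_abs_le θ
      nlinarith [abs_nonneg θ]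
    have h2 : (0:ℝ) ≤ Real.sqrt N * C + |θ| := by
      have h2 : ‖f v‖ ≤ C := hC v hv
      nlinarith [Real.sqrt_nonneg (N:ℝ), norm_nonneg (f v), abs_nonneg θ]
    exact max_le h1 h2
  have hbddh : ∀ t : ℝ, t ≤ T → BddAbove (h '' Icc 0 t) := by
    intro t ht
    refine ⟨Real.sqrt N * C + |θ|, ?_⟩
    rintro x ⟨v, hv, rfl⟩
    exact hhb v ⟨hv.1, le_trans hv.2 ht⟩
  have hregmem : ∀ s : ℝ, 0 ≤ s → s ≤ T → h s ≤ reg N θ f s := by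
    intro s hs hsT
    exact le_csSup (hbddh s hsT) ⟨s, ⟨hs, le_rfl⟩, rfl⟩
  have hregmono : ∀ s u : ℝ, 0 ≤ s → s ≤ u → u ≤ T → reg N θ f s ≤ reg N θ f u := by
    intro s u hs hsu huT
    exact csSup_le_csSup (hbddh u huT) ⟨h s, ⟨s, ⟨hs, le_rfl⟩, rfl⟩⟩
      (image_mono (Icc_subset_Icc le_rfl hsu))
  -- main regulator estimate
  have hregkey : ∀ s u : ℝ, 0 ≤ s → s < u → u ≤ s + δ → s + δ ≤ T →
      reg N θ f u ≤ reg N θ f s + Real.sqrt N * w := by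
    intro s u hs hsu huδ hδT
    refine csSup_le ⟨h 0, ⟨0, ⟨le_rfl, by linarith⟩, rfl⟩⟩ ?_
    rintro x ⟨v, ⟨hv0, hvu⟩, rfl⟩
    rcases le_or_gt v s with hvs | hvs
    · have h1 : h v ≤ reg N θ f s :=
        le_csSup (hbddh s (by linarith)) ⟨v, ⟨hv0, hvs⟩, rfl⟩
      have h2 : 0 ≤ Real.sqrt N * w := mul_nonneg (Real.sqrt_nonneg _) hw0
      linarith
    · have hfvs : ‖f v - f s‖ ≤ w := key s v hs hvs (by linarith) hδT
      have hsum : |sumC (f v) - sumC (f s)| ≤ Real.sqrt N * w := by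
        rw [← sumC_sub]
        exact le_trans (abs_sumC_le _) (mul_le_mul_of_nonneg_left hfvs (Real.sqrt_nonneg _))
      have hmax : h v ≤ h s + |sumC (f v) - sumC (f s)| := by
        simp only [hh]
        rcases le_or_gt (sumC (f v) - θ) 0 with hc | hc
        · have := abs_nonneg (sumC (f v) - sumC (f s))
          have := le_max_right (sumC (f s) - θ) 0
          rw [max_eq_right hc]; linarith
        · rw [max_eq_left hc.le]
          have h1 : sumC (f v) - θ ≤ (sumC (f s) - θ) + |sumC (f v) - sumC (f s)| := by
            have := le_abs_self (sumC (f v) - sumC (f s)); linarith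
          have := le_max_left (sumC (f s) - θ) 0
          linarith
      have hhs : h s ≤ reg N θ f s := hregmem s hs (by linarith)
      linarith
  -- conclude
  apply Real.sSup_le
  · rintro x ⟨s, u, hs, hsu, huδ, hδT, rfl⟩
    have hfw : ‖f u - f s‖ ≤ w := key s u hs hsu huδ hδT
    have hr1 : reg N θ f s ≤ reg N θ f u := hregmono s u hs hsu.le (by linarith)
    have hr2 : reg N θ f u ≤ reg N θ f s + Real.sqrt N * w := hregkey s u hs hsu huδ hδT
    have heN : ‖eN N hN‖ = 1 := by simp [eN]
    have hdiff : Gam N hN θ f u - Gam N hN θ f s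
        = (f u - f s) - (reg N θ f u - reg N θ f s) • eN N hN := by
      simp only [Gam, sub_smul]
      abel
    calc ‖Gam N hN θ f u - Gam N hN θ f s‖
        ≤ ‖f u - f s‖ + ‖(reg N θ f u - reg N θ f s) • eN N hN‖ := by
          rw [hdiff]; exact norm_sub_le _ _
      _ = ‖f u - f s‖ + |reg N θ f u - reg N θ f s| := by rw [norm_smul, heN]; simp
      _ ≤ w + Real.sqrt N * w := by
          have : |reg N θ f u - reg N θ f s| ≤ Real.sqrt N * w := by
            rw [abs_of_nonneg (by linarith)]; linarith
          linarith
      _ = (1 + Real.sqrt N) * w := by ring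
  · positivity
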